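/- Let q = 2^m, d ≥ 1, G ≤ GL_d(F_{q'}), and suppose there exist r > (q-1)/3 elements u_1,...,u_r ∈ G whose traces α_1,...,α_r are distinct elements of F_q^*. Then for every proper subset S ⊊ {0,...,m-1} with M = ∑_{i∈S} 2^i, there exists some index i with α_i^M ∉ F_2; consequently the tensor product ρ_S of Frobenius twists contains an element of trace outside F_2 and cannot be defined over F_2. -/

import Mathlib

/-- Let `q = 2^m`, let `K` be a field with `q' = q^e` elements, and suppose there are
`r > (q-1)/3` matrices `u_1,…,u_r ∈ GL_d(K)` whose traces `α_1,…,α_r` are distinct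
elements of `F_q^*`.  Then for every proper nonempty subset `S ⊊ {0,…,m-1}` with
`M = ∑_{i∈S} 2^i` there is an index `i` with `α_i^M ∉ F_2 = {0,1}`; consequently the
tensor product `ρ_S` of Frobenius twists (whose trace at `u_i` is the product of the
traces of the entrywise `2^j`-th power matrices) takes at `u_i` a value outside `F_2`,
hence `ρ_S` cannot be defined over `F_2`. -/
theorem frobenius_tensor_not_over_F2 (m e d : ℕ) (hm : 0 < m) (he : 0 < e) (hd : 0 < d)
    (K : Type*) [Field K] [Fintype K] (hK : Fintype.card K = 2 ^ (m * e))
    (r : ℕ) (hr : 2 ^ m - 1 < 3 * r)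
    (u : Fin r → Matrix (Fin d) (Fin d) K) (hu : ∀ i, IsUnit (u i))
    (α : Fin r → K) (htr : ∀ i, (u i).trace = α i)
    (hα0 : ∀ i, α i ≠ 0) (hαq : ∀ i, (α i) ^ 2 ^ m = α i)
    (hdist : Function.Injective α)
    (S : Finset ℕ) (hS : S ⊆ Finset.range m) (hSne : S.Nonempty)
    (hSprop : S ≠ Finset.range m) :
    ∃ i : Fin r, (α i ^ (∑ j ∈ S, 2 ^ j) ≠ 0 ∧ α i ^ (∑ j ∈ S, 2 ^ j) ≠ 1) ∧
      (∏ j ∈ S, ((u i).map fun a => a ^ 2 ^ j).trace) ∉ ({0, 1} : Set K) := by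
  -- characteristic 2
  have hp2 : Fact (Nat.Prime 2) := ⟨Nat.prime_two⟩
  have hchar : CharP K 2 := by
    have hcp : CharP K (ringChar K) := ringChar.charP K
    obtain ⟨n, hprime, hcard⟩ := FiniteField.card K (ringChar K)
    have hdvd : ringChar K ∣ 2 ^ (m * e) := by
      rw [← hK, hcard]; exact dvd_pow_self _ n.ne_zero
    have := (Nat.Prime.dvd_of_dvd_pow hprime hdvd)
    have h2 : ringChar K = 2 := (Nat.prime_dvd_prime_iff_eq hprime Nat.prime_two).mp this
    rwa [h2] at hcp
  set M := ∑ j ∈ S, 2 ^ j with hM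
  -- bounds on M
  have hMpos : 0 < M := by
    obtain ⟨j, hj⟩ := hSne
    exact lt_of_lt_of_le (pow_pos (by norm_num) j) (Finset.single_le_sum
      (fun k _ => Nat.zero_le _) hj)
  have hMlt : M < 2 ^ m - 1 := by
    obtain ⟨j, hjm, hjS⟩ := Finset.exists_of_ssubset (hS.ssubset_of_ne hSprop)
    have : M < ∑ j ∈ Finset.range m, 2 ^ j :=
      Finset.sum_lt_sum_of_subset hS hjm hjS (pow_pos (by norm_num) j)
        (fun k _ _ => Nat.zero_le _)
    rw [Nat.geomSum_eq le_rfl] at this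
    simpa using this
  -- every α i is a (2^m - 1)-th root of unity
  have hroot : ∀ i, α i ^ (2 ^ m - 1) = 1 := by
    intro i
    have h1 : α i ^ (2 ^ m - 1) * α i = 1 * α i := by
      rw [one_mul, ← pow_succ, Nat.sub_add_cancel (Nat.one_le_two_pow), hαq]
    exact mul_right_cancel₀ (hα0 i) h1
  -- existence of i with α i ^ M ≠ 1
  have key : ∃ i : Fin r, α i ^ M ≠ 1 := by
    by_contra h
    push_neg at h
    set g := Nat.gcd M (2 ^ m - 1) with hg
    have hgdvd : g ∣ 2 ^ m - 1 := Nat.gcd_dvd_right _ _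
    have hgpos : 0 < g := Nat.gcd_pos_of_pos_left _ hMpos
    have hgne : g ≠ 2 ^ m - 1 := by
      intro hge
      have : g ≤ M := Nat.le_of_dvd hMpos (Nat.gcd_dvd_left _ _)
      omega
    -- since 2^m - 1 is odd and g is a proper divisor, 3 * g ≤ 2^m - 1
    have hodd : Odd (2 ^ m - 1) :=
      Nat.Even.sub_odd Nat.one_le_two_pow
        ((Nat.even_pow).mpr ⟨even_two, hm.ne'⟩) odd_one
    obtain ⟨k, hk⟩ := hgdvd
    have hk1 : k ≠ 1 := by rintro rfl; simp at hk; omega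
    have hk0 : k ≠ 0 := by rintro rfl; simp at hk; omega
    have hk2 : k ≠ 2 := by
      rintro rfl
      rcases hodd with ⟨t, ht⟩
      omega
    have h3g : 3 * g ≤ 2 ^ m - 1 := by
      have : 3 ≤ k := by omega
      calc 3 * g ≤ k * g := Nat.mul_le_mul_right g this
        _ = 2 ^ m - 1 := by rw [mul_comm, ← hk]
    -- all α i are g-th roots of unity, but there are r > g of them
    have hgr : ∀ i, α i ^ g = 1 := fun i => pow_gcd_eq_one.mpr ⟨h i, hroot i⟩
    classical
    have hsub : Finset.image α Finset.univ ⊆ (Polynomial.nthRoots g (1 : K)).toFinset := by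
      intro x hx
      obtain ⟨i, _, rfl⟩ := Finset.mem_image.mp hx
      rw [Multiset.mem_toFinset, Polynomial.mem_nthRoots hgpos]
      exact hgr i
    have hcard : r ≤ g := by
      calc r = (Finset.image α Finset.univ).card := by
              rw [Finset.card_image_of_injective _ hdist, Finset.card_univ, Fintype.card_fin]
        _ ≤ (Polynomial.nthRoots g (1 : K)).toFinset.card := Finset.card_le_card hsub
        _ ≤ Multiset.card (Polynomial.nthRoots g (1 : K)) := Multiset.toFinset_card_le _
        _ ≤ g := Polynomial.card_nthRoots g 1
    omega
  obtain ⟨i, hi⟩ := key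
  have hne0 : α i ^ M ≠ 0 := pow_ne_zero _ (hα0 i)
  refine ⟨i, ⟨hne0, hi⟩, ?_⟩
  -- the trace of the entrywise power is the power of the trace (Frobenius)
  have htrpow : ∀ j, ((u i).map fun a => a ^ 2 ^ j).trace = α i ^ 2 ^ j := by
    intro j
    have : ((u i).map fun a => a ^ 2 ^ j).trace = ∑ k, (u i k k) ^ 2 ^ j := by
      simp [Matrix.trace, Matrix.diag, Matrix.map_apply]
    rw [this, ← htr i]
    have : ∀ (s : Finset (Fin d)), (∑ k ∈ s, u i k k) ^ 2 ^ j
        = ∑ k ∈ s, (u i k k) ^ 2 ^ j := by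
      intro s
      induction s using Finset.induction with
      | empty => simp [zero_pow (pow_pos two_pos j).ne']
      | insert x s hx ih =>
        rw [Finset.sum_insert hx, Finset.sum_insert hx, add_pow_char_pow, ih]
    exact (this Finset.univ).symm ▸ rfl
  have hprod : (∏ j ∈ S, ((u i).map fun a => a ^ 2 ^ j).trace) = α i ^ M := by
    rw [hM, ← Finset.prod_pow_eq_pow_sum]
    exact Finset.prod_congr rfl fun j _ => htrpow j
  rw [hprod]
  intro hmem
  rcases hmem with h0 | h1
  · exact hne0 h0
  · exact hi h1
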